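/- Let G be a connected graph of even order n ≥ 4 with 2·γnt(G) = n. Then every spanning tree T of G satisfies 2·γnt(T) = n. -/

import Mathlib

open SimpleGraph

variable {V : Type*}

/-- The open neighborhood `N(S)` of a set `S` of vertices: all vertices having a neighbor in `S`. -/
def openNbhd (G : SimpleGraph V) (S : Set V) : Set V := {v | ∃ u ∈ S, G.Adj u v}

/-- `S` is a dominating set: every vertex not in `S` has a neighbor in `S`. -/
def IsDomSet (G : SimpleGraph V) (S : Set V) : Prop := ∀ v ∉ S, ∃ u ∈ S, G.Adj u v

/-- `S` is a total dominating set: every vertex has a neighbor in `S`. -/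
def IsTotalDomSet (G : SimpleGraph V) (S : Set V) : Prop := ∀ v, ∃ u ∈ S, G.Adj u v

/-- `S` is a neighborhood total dominating set: a dominating set such that the subgraph
induced by the open neighborhood `N(S)` has no isolated vertex. -/
def IsNTDSet (G : SimpleGraph V) (S : Set V) : Prop :=
  IsDomSet G S ∧ ∀ v ∈ openNbhd G S, ∃ u ∈ openNbhd G S, G.Adj v u

/-- The domination number `γ(G)`. -/
noncomputable def domNum (G : SimpleGraph V) : ℕ :=
  sInf {n | ∃ S : Set V, IsDomSet G S ∧ S.ncard = n}

/-- The total domination number `γt(G)`. -/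
noncomputable def totalDomNum (G : SimpleGraph V) : ℕ :=
  sInf {n | ∃ S : Set V, IsTotalDomSet G S ∧ S.ncard = n}

/-- The neighborhood total domination number `γnt(G)`. -/
noncomputable def ntdNum (G : SimpleGraph V) : ℕ :=
  sInf {n | ∃ S : Set V, IsNTDSet G S ∧ S.ncard = n}

section Aux

universe u
variable {W : Type u} {T : SimpleGraph W}

/-- `z` has two distinct neighbors (i.e. it is not a leaf nor isolated). -/
def TwoNbrs (T : SimpleGraph W) (z : W) : Prop := ∃ x y, x ≠ y ∧ T.Adj z x ∧ T.Adj z y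

lemma interior_two_nbrs {a b z : W} (p : T.Walk a b) :
    p.IsPath → z ∈ p.support → z ≠ a → z ≠ b →
    ∃ x y, x ≠ y ∧ x ∈ p.support ∧ y ∈ p.support ∧ T.Adj z x ∧ T.Adj z y := by
  induction p with
  | nil =>
    intro _ hz hza _
    simp only [Walk.support_nil, List.mem_singleton] at hz
    exact absurd hz hza
  | @cons u c d h q ih =>
    intro hp hz hza hzb
    rw [Walk.support_cons, List.mem_cons] at hz
    rcases hz with rfl | hz
    · exact absurd rfl hza
    · by_cases hzc : z = c
      · subst hzc
        cases q with
        | nil => exact absurd rfl hzb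
        | @cons _ e _ h2 q2 =>
          refine ⟨u, e, ?_, ?_, ?_, h.symm, h2⟩
          · rintro rfl
            rw [Walk.cons_isPath_iff] at hp
            exact hp.2 (by rw [Walk.support_cons]; exact List.mem_cons_of_mem _ q2.start_mem_support)
          · rw [Walk.support_cons]; exact List.mem_cons_self
          · rw [Walk.support_cons, Walk.support_cons]
            exact List.mem_cons_of_mem _ (List.mem_cons_of_mem _ q2.start_mem_support)
      · obtain ⟨x, y, hxy, hxs, hys, h1, h2⟩ := ih hp.of_cons hz hzc hzb
        exact ⟨x, y, hxy, by rw [Walk.support_cons]; exact List.mem_cons_of_mem _ hxs,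
          by rw [Walk.support_cons]; exact List.mem_cons_of_mem _ hys, h1, h2⟩

lemma twonbrs_of_path {a b : W} (p : T.Walk a b) (hp : p.IsPath) (hab : a ≠ b)
    (hnadj : ¬ T.Adj a b) : ∃ z, TwoNbrs T z := by
  cases p with
  | nil => exact absurd rfl hab
  | @cons _ c _ h q =>
    by_cases hcb : c = b
    · subst hcb; exact absurd h hnadj
    · obtain ⟨x, y, hxy, _, _, h1, h2⟩ := interior_two_nbrs (Walk.cons h q) hp
        (by rw [Walk.support_cons]; exact List.mem_cons_of_mem _ q.start_mem_support)
        h.ne' hcb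
      exact ⟨c, x, y, hxy, h1, h2⟩

lemma exists_nonleaf [Fintype W] (hT : T.IsTree) (h3 : 3 ≤ Fintype.card W) :
    ∃ z, TwoNbrs T z := by
  classical
  obtain ⟨a, b, hab⟩ := Fintype.exists_pair_of_one_lt_card (α := W) (by omega : 1 < Fintype.card W)
  have hc : ∃ c, c ≠ a ∧ c ≠ b := by
    by_contra hcon
    push_neg at hcon
    have hsub : (Finset.univ : Finset W) ⊆ {a, b} := by
      intro x _
      have hx : x = a ∨ x = b := by
        by_cases hxa : x = a
        · exact Or.inl hxa
        · exact Or.inr (hcon x hxa)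
      rcases hx with rfl | rfl <;> simp
    have := Finset.card_le_card hsub
    have h2 : ({a, b} : Finset W).card ≤ 2 := by
      apply le_trans (Finset.card_insert_le _ _); simp
    rw [Finset.card_univ] at this; omega
  obtain ⟨c, hca, hcb⟩ := hc
  have conn := hT.isConnected
  have getpath : ∀ x y : W, x ≠ y → ¬ T.Adj x y → ∃ z, TwoNbrs T z := by
    intro x y hxy hnadj
    obtain ⟨w⟩ := conn.preconnected x y
    exact twonbrs_of_path w.bypass w.bypass_isPath hxy hnadj
  by_cases h1 : T.Adj a b
  · by_cases h2 : T.Adj a c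
    · by_cases h3' : T.Adj c b
      · exfalso
        obtain ⟨p0, _, hu⟩ := hT.existsUnique_path a b
        have hp1 : (Walk.cons h1 Walk.nil : T.Walk a b).IsPath := by
          simp [Walk.cons_isPath_iff, hab]
        have hp2 : (Walk.cons h2 (Walk.cons h3' Walk.nil) : T.Walk a b).IsPath := by
          simp [Walk.cons_isPath_iff, hcb, hca.symm, hab]
        have e1 := hu _ hp1
        have e2 := hu _ hp2
        have : (Walk.cons h1 Walk.nil : T.Walk a b).length
            = (Walk.cons h2 (Walk.cons h3' Walk.nil) : T.Walk a b).length := by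
          rw [e1, e2]
        simp at this
      · exact getpath c b hcb h3'
    · exact getpath a c hca.symm h2
  · exact getpath a b hab h1

lemma dist_lt_of_mem_support {r x z : W} (p : T.Walk r x) (hz : z ∈ p.support)
    (hzx : z ≠ x) : T.dist r z < p.length := by
  classical
  have hspec := p.take_spec hz
  have hlen : (p.takeUntil z hz).length + (p.dropUntil z hz).length = p.length := by
    rw [← Walk.length_append, hspec]
  have hd : (p.dropUntil z hz).length ≠ 0 := by
    intro h0
    exact hzx (Walk.eq_of_length_eq_zero h0)
  have := dist_le (p.takeUntil z hz)
  omega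

lemma exists_penultimate [Fintype W] (hT : T.IsTree) (h3 : 3 ≤ Fintype.card W) :
    ∃ v, TwoNbrs T v ∧ ∀ x y, T.Adj v x → T.Adj v y → TwoNbrs T x → TwoNbrs T y → x = y := by
  classical
  obtain ⟨z0, hz0⟩ := exists_nonleaf hT h3
  have hne : (Finset.univ.filter (fun z => TwoNbrs T z)).Nonempty :=
    ⟨z0, by simp [hz0]⟩
  have hVne : Nonempty W := Fintype.card_pos_iff.mp (by omega)
  obtain ⟨r⟩ := hVne
  obtain ⟨v, hvmem, hvmax⟩ := Finset.exists_max_image _ (T.dist r) hne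
  simp only [Finset.mem_filter] at hvmem
  refine ⟨v, hvmem.2, ?_⟩
  intro x y hvx hvy hx hy
  by_contra hxy
  have hdx : T.dist r x ≤ T.dist r v := hvmax x (by simp [hx])
  have hdy : T.dist r y ≤ T.dist r v := hvmax y (by simp [hy])
  have build : ∀ x, T.Adj v x → T.dist r x ≤ T.dist r v →
      ∃ q : T.Walk r v, q.IsPath ∧ x ∈ q.support ∧
        ∀ t ∈ q.support, t ≠ v → t ≠ x → T.dist r t < T.dist r x := by
    intro x hvx hdx
    obtain ⟨w0, hw0⟩ := (hT.isConnected.preconnected r x).exists_walk_length_eq_dist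
    set p := w0.bypass with hp_def
    have hp : p.IsPath := w0.bypass_isPath
    have hplen : p.length ≤ T.dist r x := by
      rw [← hw0]; exact w0.length_bypass_le
    have hvns : v ∉ p.support := by
      intro hv
      have hvx' : v ≠ x := hvx.ne
      have := dist_lt_of_mem_support p hv hvx'
      omega
    refine ⟨p.concat hvx.symm, ?_, ?_, ?_⟩
    · rw [← Walk.isPath_reverse_iff, Walk.reverse_concat]
      rw [Walk.cons_isPath_iff]
      refine ⟨by rw [Walk.isPath_reverse_iff]; exact hp, ?_⟩
      rw [Walk.support_reverse]
      intro hmem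
      exact hvns (List.mem_reverse.mp hmem)
    · rw [Walk.support_concat]
      exact List.mem_append_left _ p.end_mem_support
    · intro t ht htv htx
      rw [Walk.support_concat] at ht
      rcases List.mem_append.mp ht with ht' | ht'
      · have := dist_lt_of_mem_support p ht' htx
        omega
      · simp at ht'; exact absurd ht' htv
  obtain ⟨qx, hqx, hxmem, hqxprop⟩ := build x hvx hdx
  obtain ⟨qy, hqy, hymem, hqyprop⟩ := build y hvy hdy
  obtain ⟨p0, _, hu⟩ := hT.existsUnique_path r v
  have e : qx = qy := by rw [hu _ hqx, hu _ hqy]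
  have h1 : T.dist r x < T.dist r y := by
    apply hqyprop x (e ▸ hxmem) hvx.ne.symm hxy
  have h2 : T.dist r y < T.dist r x := by
    apply hqxprop y (e.symm ▸ hymem) hvy.ne.symm (Ne.symm hxy)
  omega

lemma reachable_induce {s : Set W} {a b : W} (p : T.Walk a b) :
    ∀ (ha : a ∈ s) (hb : b ∈ s), (∀ z ∈ p.support, z ∈ s) →
    (T.induce s).Reachable ⟨a, ha⟩ ⟨b, hb⟩ := by
  induction p with
  | nil => intro ha hb _; exact Reachable.refl _
  | @cons x c y h q ih =>
    intro ha hb hsup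
    have hc : c ∈ s := hsup c (by rw [Walk.support_cons]; exact List.mem_cons_of_mem _ q.start_mem_support)
    have hadj : (T.induce s).Adj ⟨x, ha⟩ ⟨c, hc⟩ := by simpa using h
    exact hadj.reachable.trans (ih hc hb (fun z hz => hsup z (by rw [Walk.support_cons]; exact List.mem_cons_of_mem _ hz)))

lemma induce_tree {s : Set W} (hT : T.IsTree) (hne : ∃ x, x ∈ s)
    (havoid : ∀ a, a ∈ s → ∀ b, b ∈ s → ∃ p : T.Walk a b, ∀ z ∈ p.support, z ∈ s) :
    (T.induce s).IsTree := by
  constructor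
  · rw [connected_iff]
    refine ⟨?_, ?_⟩
    · rintro ⟨a, ha⟩ ⟨b, hb⟩
      obtain ⟨p, hp⟩ := havoid a ha b hb
      exact reachable_induce p ha hb hp
    · obtain ⟨x, hx⟩ := hne; exact ⟨⟨x, hx⟩⟩
  · intro v c hc
    exact hT.IsAcyclic _ (hc.map (f := (SimpleGraph.Embedding.induce (G := T) s).toHom)
      (SimpleGraph.Embedding.induce (G := T) s).injective)

lemma star_cover_aux {x v : W} (p : T.Walk x v) :
    (∀ z, T.Adj v z → ¬ TwoNbrs T z) → p.IsPath → x = v ∨ T.Adj v x := by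
  induction p with
  | nil => exact fun _ _ => Or.inl rfl
  | @cons x c y h q ih =>
      intro hleaf hp
      rcases ih hleaf hp.of_cons with rfl | hvc
      · exact Or.inr h.symm
      · exfalso
        cases q with
        | nil => exact hvc.ne rfl
        | @cons _ d _ h2 q2 =>
          apply hleaf c hvc
          refine ⟨x, d, ?_, h.symm, h2⟩
          rintro rfl
          rw [Walk.cons_isPath_iff] at hp
          exact hp.2 (by rw [Walk.support_cons]; exact List.mem_cons_of_mem _ q2.start_mem_support)

lemma star_cover {v : W} (hT : T.IsTree) (hleaf : ∀ z, T.Adj v z → ¬ TwoNbrs T z) :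
    ∀ x, x ≠ v → T.Adj v x := by
  classical
  intro x hx
  obtain ⟨w⟩ := hT.isConnected.preconnected x v
  rcases star_cover_aux w.bypass hleaf w.bypass_isPath with rfl | h
  · exact absurd rfl hx
  · exact h

lemma isNTDSet_mono {G T : SimpleGraph W} (hle : T ≤ G) (hnbr : ∀ v : W, ∃ u, T.Adj v u)
    {S : Set W} (h : IsNTDSet T S) : IsNTDSet G S := by
  obtain ⟨hdom, hcond⟩ := h
  have hsub : openNbhd T S ⊆ openNbhd G S := by
    rintro x ⟨u, hu, hadj⟩; exact ⟨u, hu, hle hadj⟩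
  constructor
  · intro v hv; obtain ⟨u, hu, hadj⟩ := hdom v hv; exact ⟨u, hu, hle hadj⟩
  · intro v hv
    by_cases hvT : v ∈ openNbhd T S
    · obtain ⟨u, hu, hadj⟩ := hcond v hvT
      exact ⟨u, hsub hu, hle hadj⟩
    · have hvS : v ∈ S := by
        by_contra hvS
        obtain ⟨u, hu, hadj⟩ := hdom v hvS
        exact hvT ⟨u, hu, hadj⟩
      obtain ⟨z, hz⟩ := hnbr v
      exact ⟨z, hsub ⟨v, hvS, hz⟩, hle hz⟩

lemma exists_nbr [Fintype W] (hT : T.Connected) (h2 : 2 ≤ Fintype.card W) (v : W) :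
    ∃ u, T.Adj v u := by
  classical
  obtain ⟨u, hu⟩ : ∃ u : W, u ≠ v := Fintype.exists_ne_of_one_lt_card (by omega) v
  obtain ⟨w⟩ := hT.preconnected v u
  cases w with
  | nil => exact absurd rfl hu
  | cons h q => exact ⟨_, h⟩

lemma ntd_induce_unpack {s : Set W} {S' : Set ↥s} (h : IsNTDSet (T.induce s) S') :
    (∀ x, x ∈ s → x ∉ (Subtype.val '' S') → ∃ y ∈ Subtype.val '' S', T.Adj y x) ∧
    (∀ x, x ∈ s → (∃ y ∈ Subtype.val '' S', T.Adj y x) →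
      ∃ x', x' ∈ s ∧ (∃ y ∈ Subtype.val '' S', T.Adj y x') ∧ T.Adj x x') := by
  obtain ⟨hdom, hcond⟩ := h
  constructor
  · intro x hx hxS
    have hmem : (⟨x, hx⟩ : ↥s) ∉ S' := fun hmem => hxS ⟨⟨x, hx⟩, hmem, rfl⟩
    obtain ⟨a, ha, hadj⟩ := hdom _ hmem
    exact ⟨a.1, ⟨a, ha, rfl⟩, hadj⟩
  · rintro x hx ⟨y, ⟨a, haS, rfl⟩, hadj⟩
    have hxN : (⟨x, hx⟩ : ↥s) ∈ openNbhd (T.induce s) S' := ⟨a, haS, hadj⟩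
    obtain ⟨u, huN, hadj2⟩ := hcond _ hxN
    obtain ⟨b, hbS, hbadj⟩ := huN
    exact ⟨u.1, u.2, ⟨b.1, ⟨b, hbS, rfl⟩, hbadj⟩, hadj2⟩

lemma card_compl_pair [Fintype W] {p q : W} (hpq : p ≠ q) [Fintype ↥(({p,q} : Set W)ᶜ)] :
    Fintype.card ↥(({p,q} : Set W)ᶜ) = Fintype.card W - 2 := by
  have h1 := Set.ncard_add_ncard_compl ({p,q} : Set W) (Set.toFinite _)
  rw [Set.ncard_pair hpq] at h1
  rw [Fintype.card_eq_nat_card, Nat.card_coe_set_eq]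
  rw [Nat.card_eq_fintype_card] at h1
  omega

end Aux

theorem keyNTD : ∀ (n : ℕ) (W : Type u) [Fintype W] (T : SimpleGraph W), T.IsTree →
    Fintype.card W = n → 3 ≤ n → ∃ S : Set W, IsNTDSet T S ∧ 2 * S.ncard ≤ n + 1 := by
  intro n
  induction n using Nat.strong_induction_on with
  | _ n IH =>
  intro W _ T hT hcard h3
  classical
  -- find a penultimate vertex
  obtain ⟨vc, hvTwo, hvuniq⟩ := exists_penultimate hT (by omega)
  by_cases hstar : ∀ z, T.Adj vc z → ¬ TwoNbrs T z
  · -- star case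
    obtain ⟨u0, _, _, hu, _⟩ := hvTwo
    refine ⟨{vc, u0}, ⟨?_, ?_⟩, ?_⟩
    · intro x hx
      have hxv : x ≠ vc := fun hh => hx (by simp [hh])
      exact ⟨vc, by simp, star_cover hT hstar x hxv⟩
    · intro x hxN
      by_cases hxv : x = vc
      · exact ⟨u0, ⟨vc, by simp, hu⟩, by rw [hxv]; exact hu⟩
      · exact ⟨vc, ⟨u0, by simp, hu.symm⟩, (star_cover hT hstar x hxv).symm⟩
    · rw [Set.ncard_pair hu.ne]
      omega
  · push_neg at hstar
    obtain ⟨w, hvw, hwTwo⟩ := hstar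
    have hwuniq : ∀ z, T.Adj vc z → TwoNbrs T z → z = w :=
      fun z hz hzT => hvuniq z w hz hvw hzT hwTwo
    obtain ⟨a0, b0, hab0, hva0, hvb0⟩ := hvTwo
    obtain ⟨a1, b1, hab1, hwa1, hwb1⟩ := hwTwo
    -- the vertex x : a neighbor of w different from vc
    have hx_ex : ∃ x, T.Adj w x ∧ x ≠ vc := by
      by_cases ha1v : a1 = vc
      · exact ⟨b1, hwb1, by rw [← ha1v]; exact hab1.symm⟩
      · exact ⟨a1, hwa1, ha1v⟩
    obtain ⟨x, hwx, hxv⟩ := hx_ex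
    have hxw : x ≠ w := hwx.ne'
    by_cases hcaseA : ∃ u1 u2, u1 ≠ u2 ∧ T.Adj vc u1 ∧ T.Adj vc u2 ∧ u1 ≠ w ∧ u2 ≠ w
    · -- Case A : vc has at least two leaf neighbors u1 u2
      obtain ⟨u1, u2, h12, hvu1, hvu2, h1w, h2w⟩ := hcaseA
      have hleaf1 : ¬ TwoNbrs T u1 := fun hc => h1w (hwuniq u1 hvu1 hc)
      have hleaf2 : ¬ TwoNbrs T u2 := fun hc => h2w (hwuniq u2 hvu2 hc)
      have honly1 : ∀ z, T.Adj u1 z → z = vc := by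
        intro z hz
        by_contra hzv
        exact hleaf1 ⟨z, vc, hzv, hz, hvu1.symm⟩
      have honly2 : ∀ z, T.Adj u2 z → z = vc := by
        intro z hz
        by_contra hzv
        exact hleaf2 ⟨z, vc, hzv, hz, hvu2.symm⟩
      have hxu1 : x ≠ u1 := by
        rintro rfl
        exact hvw.ne' (honly1 w hwx.symm)
      have hxu2 : x ≠ u2 := by
        rintro rfl
        exact hvw.ne' (honly2 w hwx.symm)
      have h5 : 5 ≤ n := by
        have hsub := Finset.card_le_univ ({vc, w, u1, u2, x} : Finset W)
        have hc5 : ({vc, w, u1, u2, x} : Finset W).card = 5 := by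
          rw [Finset.card_insert_of_notMem (by simp [hvw.ne, hvu1.ne, hvu2.ne, hxv.symm]),
            Finset.card_insert_of_notMem (by simp [Ne.symm h1w, Ne.symm h2w, hxw.symm]),
            Finset.card_insert_of_notMem (by simp [h12, hxu1.symm]),
            Finset.card_insert_of_notMem (by simp [hxu2.symm]),
            Finset.card_singleton]
        rw [hcard] at hsub
        omega
      set s : Set W := ({u1, u2} : Set W)ᶜ with hsdef
      have hmem_s : ∀ z, z ∈ s ↔ z ≠ u1 ∧ z ≠ u2 := by
        intro z
        simp [hsdef]
      have hvs : vc ∈ s := (hmem_s vc).mpr ⟨hvu1.ne, hvu2.ne⟩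
      have hws : w ∈ s := (hmem_s w).mpr ⟨Ne.symm h1w, Ne.symm h2w⟩
      have havoid : ∀ aa, aa ∈ s → ∀ bb, bb ∈ s → ∃ p : T.Walk aa bb, ∀ z ∈ p.support, z ∈ s := by
        intro aa haa bb hbb
        obtain ⟨p0⟩ := hT.isConnected.preconnected aa bb
        refine ⟨p0.bypass, ?_⟩
        intro z hz
        rw [hmem_s]
        constructor
        · rintro rfl
          have hz1 : z ≠ aa := by rintro rfl; exact (((hmem_s z).mp haa).1 rfl)
          have hz2 : z ≠ bb := by rintro rfl; exact (((hmem_s z).mp hbb).1 rfl)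
          obtain ⟨x1, y1, hxy1, _, _, ha1, ha2⟩ :=
            interior_two_nbrs p0.bypass p0.bypass_isPath hz hz1 hz2
          exact hleaf1 ⟨x1, y1, hxy1, ha1, ha2⟩
        · rintro rfl
          have hz1 : z ≠ aa := by rintro rfl; exact (((hmem_s z).mp haa).2 rfl)
          have hz2 : z ≠ bb := by rintro rfl; exact (((hmem_s z).mp hbb).2 rfl)
          obtain ⟨x1, y1, hxy1, _, _, ha1, ha2⟩ :=
            interior_two_nbrs p0.bypass p0.bypass_isPath hz hz1 hz2
          exact hleaf2 ⟨x1, y1, hxy1, ha1, ha2⟩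
      have htree' : (T.induce s).IsTree := induce_tree hT ⟨vc, hvs⟩ havoid
      haveI : Fintype ↥s := Fintype.ofFinite _
      have hcard' : Fintype.card ↥s = n - 2 := by
        rw [Fintype.card_eq_nat_card, Nat.card_coe_set_eq]
        have h1 := Set.ncard_add_ncard_compl ({u1, u2} : Set W) (Set.toFinite _)
        rw [Set.ncard_pair h12, Nat.card_eq_fintype_card, hcard] at h1
        rw [hsdef]
        omega
      obtain ⟨S', hS', hS'card⟩ := IH (n - 2) (by omega) ↥s (T.induce s) htree' hcard' (by omega)
      obtain ⟨hdom'', hcond''⟩ := ntd_induce_unpack hS'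
      set S'' : Set W := Subtype.val '' S' with hS''def
      have hS''sub : S'' ⊆ s := by rintro _ ⟨c0, _, rfl⟩; exact c0.2
      have hS''card : S''.ncard = S'.ncard := Set.ncard_image_of_injective _ Subtype.val_injective
      have hcardgoal : ∀ c : W, 2 * (insert c S'').ncard ≤ n + 1 := by
        intro c
        have := Set.ncard_insert_le c S''
        omega
      have hnots : ∀ z : W, z ∉ s → z = u1 ∨ z = u2 := by
        intro z hz
        by_contra hcon
        push_neg at hcon
        exact hz ((hmem_s z).mpr hcon)
      by_cases hvN : ∃ y ∈ S'', T.Adj y vc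
      · -- extend with vc
        refine ⟨insert vc S'', ⟨?_, ?_⟩, hcardgoal vc⟩
        · intro xx hxx
          by_cases hxs : xx ∈ s
          · have hxS'' : xx ∉ S'' := fun hh => hxx (Set.mem_insert_of_mem _ hh)
            obtain ⟨y, hy, hadj⟩ := hdom'' xx hxs hxS''
            exact ⟨y, Set.mem_insert_of_mem _ hy, hadj⟩
          · rcases hnots xx hxs with rfl | rfl
            · exact ⟨vc, Set.mem_insert _ _, hvu1⟩
            · exact ⟨vc, Set.mem_insert _ _, hvu2⟩
        · have hvON : vc ∈ openNbhd T (insert vc S'') := by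
            obtain ⟨y, hy, hadj⟩ := hvN
            exact ⟨y, Set.mem_insert_of_mem _ hy, hadj⟩
          rintro xx ⟨y, hyS, hyadj⟩
          rcases Set.mem_insert_iff.mp hyS with rfl | hyS''
          · exact ⟨y, hvON, hyadj.symm⟩
          · by_cases hxs : xx ∈ s
            · obtain ⟨x', _, ⟨y', hy', hy'adj⟩, hxx'⟩ := hcond'' xx hxs ⟨y, hyS'', hyadj⟩
              exact ⟨x', ⟨y', Set.mem_insert_of_mem _ hy', hy'adj⟩, hxx'⟩
            · rcases hnots xx hxs with rfl | rfl
              · exact ⟨vc, hvON, hvu1.symm⟩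
              · exact ⟨vc, hvON, hvu2.symm⟩
      · -- vc must be in S'' ; extend with w
        have hvS'' : vc ∈ S'' := by
          by_contra hvS
          obtain ⟨y, hy, hadj⟩ := hdom'' vc hvs hvS
          exact hvN ⟨y, hy, hadj⟩
        refine ⟨insert w S'', ⟨?_, ?_⟩, hcardgoal w⟩
        · intro xx hxx
          by_cases hxs : xx ∈ s
          · have hxS'' : xx ∉ S'' := fun hh => hxx (Set.mem_insert_of_mem _ hh)
            obtain ⟨y, hy, hadj⟩ := hdom'' xx hxs hxS''
            exact ⟨y, Set.mem_insert_of_mem _ hy, hadj⟩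
          · rcases hnots xx hxs with rfl | rfl
            · exact ⟨vc, Set.mem_insert_of_mem _ hvS'', hvu1⟩
            · exact ⟨vc, Set.mem_insert_of_mem _ hvS'', hvu2⟩
        · have hvON : vc ∈ openNbhd T (insert w S'') := ⟨w, Set.mem_insert _ _, hvw.symm⟩
          have hwON : w ∈ openNbhd T (insert w S'') := ⟨vc, Set.mem_insert_of_mem _ hvS'', hvw⟩
          rintro xx ⟨y, hyS, hyadj⟩
          rcases Set.mem_insert_iff.mp hyS with rfl | hyS''
          · exact ⟨y, hwON, hyadj.symm⟩
          · by_cases hxs : xx ∈ s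
            · obtain ⟨x', _, ⟨y', hy', hy'adj⟩, hxx'⟩ := hcond'' xx hxs ⟨y, hyS'', hyadj⟩
              exact ⟨x', ⟨y', Set.mem_insert_of_mem _ hy', hy'adj⟩, hxx'⟩
            · rcases hnots xx hxs with rfl | rfl
              · exact ⟨vc, hvON, hvu1.symm⟩
              · exact ⟨vc, hvON, hvu2.symm⟩
    · -- Case B : vc has exactly one leaf neighbor u and the neighbor w
      have hu_ex : ∃ u, T.Adj vc u ∧ u ≠ w := by
        by_cases ha0w : a0 = w
        · exact ⟨b0, hvb0, by rw [← ha0w]; exact hab0.symm⟩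
        · exact ⟨a0, hva0, ha0w⟩
      obtain ⟨u, hvu, huw⟩ := hu_ex
      have hnbrv : ∀ z, T.Adj vc z → z = u ∨ z = w := by
        intro z hz
        by_contra hcon
        push_neg at hcon
        exact hcaseA ⟨z, u, hcon.1, hz, hvu, hcon.2, huw⟩
      have hleafu : ¬ TwoNbrs T u := fun hc => huw (hwuniq u hvu hc)
      have honlyu : ∀ z, T.Adj u z → z = vc := by
        intro z hz
        by_contra hzv
        exact hleafu ⟨z, vc, hzv, hz, hvu.symm⟩
      have hxu : x ≠ u := by
        rintro rfl
        exact hvw.ne' (honlyu w hwx.symm)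
      have huv : u ≠ vc := hvu.ne'
      have h4 : 4 ≤ n := by
        have hsub := Finset.card_le_univ ({vc, w, u, x} : Finset W)
        have hc4 : ({vc, w, u, x} : Finset W).card = 4 := by
          rw [Finset.card_insert_of_notMem (by simp [hvw.ne, hvu.ne, hxv.symm]),
            Finset.card_insert_of_notMem (by simp [Ne.symm huw, hxw.symm]),
            Finset.card_insert_of_notMem (by simp [hxu.symm]),
            Finset.card_singleton]
        rw [hcard] at hsub
        omega
      by_cases hn5 : 5 ≤ n
      · -- delete u and vc, apply the induction hypothesis
        set s : Set W := ({u, vc} : Set W)ᶜ with hsdef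
        have hmem_s : ∀ z, z ∈ s ↔ z ≠ u ∧ z ≠ vc := by
          intro z
          simp [hsdef]
        have hws : w ∈ s := (hmem_s w).mpr ⟨Ne.symm huw, hvw.ne'⟩
        have havoid : ∀ aa, aa ∈ s → ∀ bb, bb ∈ s →
            ∃ p : T.Walk aa bb, ∀ z ∈ p.support, z ∈ s := by
          intro aa haa bb hbb
          obtain ⟨p0⟩ := hT.isConnected.preconnected aa bb
          refine ⟨p0.bypass, ?_⟩
          have huno : u ∉ p0.bypass.support := by
            intro hmem
            have hz1 : u ≠ aa := by rintro rfl; exact (((hmem_s u).mp haa).1 rfl)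
            have hz2 : u ≠ bb := by rintro rfl; exact (((hmem_s u).mp hbb).1 rfl)
            obtain ⟨x1, y1, hxy1, _, _, ha1, ha2⟩ :=
              interior_two_nbrs p0.bypass p0.bypass_isPath hmem hz1 hz2
            exact hleafu ⟨x1, y1, hxy1, ha1, ha2⟩
          intro z hz
          rw [hmem_s]
          constructor
          · rintro rfl
            exact huno hz
          · rintro rfl
            have hz1 : z ≠ aa := by rintro rfl; exact (((hmem_s z).mp haa).2 rfl)
            have hz2 : z ≠ bb := by rintro rfl; exact (((hmem_s z).mp hbb).2 rfl)
            obtain ⟨x1, y1, hxy1, hm1, hm2, ha1, ha2⟩ :=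
              interior_two_nbrs p0.bypass p0.bypass_isPath hz hz1 hz2
            rcases hnbrv x1 ha1 with rfl | rfl
            · exact huno hm1
            · rcases hnbrv y1 ha2 with rfl | rfl
              · exact huno hm2
              · exact hxy1 rfl
        have htree' : (T.induce s).IsTree := induce_tree hT ⟨w, hws⟩ havoid
        haveI : Fintype ↥s := Fintype.ofFinite _
        have hcard' : Fintype.card ↥s = n - 2 := by
          rw [Fintype.card_eq_nat_card, Nat.card_coe_set_eq]
          have h1 := Set.ncard_add_ncard_compl ({u, vc} : Set W) (Set.toFinite _)
          rw [Set.ncard_pair huv, Nat.card_eq_fintype_card, hcard] at h1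
          rw [hsdef]
          omega
        obtain ⟨S', hS', hS'card⟩ := IH (n - 2) (by omega) ↥s (T.induce s) htree' hcard' (by omega)
        obtain ⟨hdom'', hcond''⟩ := ntd_induce_unpack hS'
        set S'' : Set W := Subtype.val '' S' with hS''def
        have hS''sub : S'' ⊆ s := by rintro _ ⟨c0, _, rfl⟩; exact c0.2
        have hS''card : S''.ncard = S'.ncard := Set.ncard_image_of_injective _ Subtype.val_injective
        have hcardgoal : ∀ c : W, 2 * (insert c S'').ncard ≤ n + 1 := by
          intro c
          have := Set.ncard_insert_le c S''
          omega
        have hvnotS'' : vc ∉ S'' := fun hh => (((hmem_s vc).mp (hS''sub hh)).2) rfl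
        by_cases hwN : ∃ y ∈ S'', T.Adj y w
        · -- extend with u
          refine ⟨insert u S'', ⟨?_, ?_⟩, hcardgoal u⟩
          · intro xx hxx
            by_cases hxs : xx ∈ s
            · have hxS'' : xx ∉ S'' := fun hh => hxx (Set.mem_insert_of_mem _ hh)
              obtain ⟨y, hy, hadj⟩ := hdom'' xx hxs hxS''
              exact ⟨y, Set.mem_insert_of_mem _ hy, hadj⟩
            · have : xx = u ∨ xx = vc := by
                by_contra hcon
                push_neg at hcon
                exact hxs ((hmem_s xx).mpr hcon)
              rcases this with rfl | rfl
              · exact absurd (Set.mem_insert _ _) hxx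
              · exact ⟨u, Set.mem_insert _ _, hvu.symm⟩
          · have hwON : w ∈ openNbhd T (insert u S'') := by
              obtain ⟨y, hy, hadj⟩ := hwN
              exact ⟨y, Set.mem_insert_of_mem _ hy, hadj⟩
            rintro xx ⟨y, hyS, hyadj⟩
            rcases Set.mem_insert_iff.mp hyS with rfl | hyS''
            · -- y = u : so xx = vc
              have hxxv : xx = vc := honlyu xx hyadj
              subst hxxv
              exact ⟨w, hwON, hvw⟩
            · by_cases hxs : xx ∈ s
              · obtain ⟨x', _, ⟨y', hy', hy'adj⟩, hxx'⟩ := hcond'' xx hxs ⟨y, hyS'', hyadj⟩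
                exact ⟨x', ⟨y', Set.mem_insert_of_mem _ hy', hy'adj⟩, hxx'⟩
              · have : xx = u ∨ xx = vc := by
                  by_contra hcon
                  push_neg at hcon
                  exact hxs ((hmem_s xx).mpr hcon)
                rcases this with rfl | rfl
                · exact absurd (honlyu y hyadj.symm ▸ hyS'') hvnotS''
                · exact ⟨w, hwON, hvw⟩
        · -- w must be in S'' ; extend with vc
          have hwS'' : w ∈ S'' := by
            by_contra hwS
            obtain ⟨y, hy, hadj⟩ := hdom'' w hws hwS
            exact hwN ⟨y, hy, hadj⟩
          refine ⟨insert vc S'', ⟨?_, ?_⟩, hcardgoal vc⟩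
          · intro xx hxx
            by_cases hxs : xx ∈ s
            · have hxS'' : xx ∉ S'' := fun hh => hxx (Set.mem_insert_of_mem _ hh)
              obtain ⟨y, hy, hadj⟩ := hdom'' xx hxs hxS''
              exact ⟨y, Set.mem_insert_of_mem _ hy, hadj⟩
            · have : xx = u ∨ xx = vc := by
                by_contra hcon
                push_neg at hcon
                exact hxs ((hmem_s xx).mpr hcon)
              rcases this with rfl | rfl
              · exact ⟨vc, Set.mem_insert _ _, hvu⟩
              · exact absurd (Set.mem_insert _ _) hxx
          · have hvON : vc ∈ openNbhd T (insert vc S'') := ⟨w, Set.mem_insert_of_mem _ hwS'', hvw.symm⟩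
            have hwON : w ∈ openNbhd T (insert vc S'') := ⟨vc, Set.mem_insert _ _, hvw⟩
            rintro xx ⟨y, hyS, hyadj⟩
            rcases Set.mem_insert_iff.mp hyS with rfl | hyS''
            · -- y = vc : xx = u or xx = w
              rcases hnbrv xx hyadj with h | h
              · exact ⟨y, hvON, by rw [h]; exact hvu.symm⟩
              · exact ⟨y, hvON, by rw [h]; exact hvw.symm⟩
            · by_cases hxs : xx ∈ s
              · obtain ⟨x', _, ⟨y', hy', hy'adj⟩, hxx'⟩ := hcond'' xx hxs ⟨y, hyS'', hyadj⟩
                exact ⟨x', ⟨y', Set.mem_insert_of_mem _ hy', hy'adj⟩, hxx'⟩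
              · have : xx = u ∨ xx = vc := by
                  by_contra hcon
                  push_neg at hcon
                  exact hxs ((hmem_s xx).mpr hcon)
                rcases this with rfl | rfl
                · exact absurd (honlyu y hyadj.symm ▸ hyS'') (fun hh =>
                    (((hmem_s vc).mp (hS''sub hh)).2) rfl)
                · exact ⟨w, hwON, hvw⟩
      · -- n = 4 : T is the path u - vc - w - x
        have hn4 : n = 4 := by omega
        have huniv : ∀ z : W, z = vc ∨ z = w ∨ z = u ∨ z = x := by
          have hc4 : ({vc, w, u, x} : Finset W).card = 4 := by
            rw [Finset.card_insert_of_notMem (by simp [hvw.ne, hvu.ne, hxv.symm]),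
              Finset.card_insert_of_notMem (by simp [Ne.symm huw, hxw.symm]),
              Finset.card_insert_of_notMem (by simp [hxu.symm]),
              Finset.card_singleton]
          have huniv' : ({vc, w, u, x} : Finset W) = Finset.univ :=
            Finset.eq_univ_of_card _ (by rw [hc4, hcard, hn4])
          intro z
          have hz : z ∈ ({vc, w, u, x} : Finset W) := huniv' ▸ Finset.mem_univ z
          simpa using hz
        refine ⟨{vc, w}, ⟨?_, ?_⟩, ?_⟩
        · intro z hz
          rcases huniv z with h | h | h | h
          · exact absurd (by simp [h]) hz
          · exact absurd (by simp [h]) hz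
          · exact ⟨vc, by simp, by rw [h]; exact hvu⟩
          · exact ⟨w, by simp, by rw [h]; exact hwx⟩
        · intro z hzN
          rcases huniv z with h | h | h | h
          · exact ⟨w, ⟨vc, by simp, hvw⟩, by rw [h]; exact hvw⟩
          · exact ⟨vc, ⟨w, by simp, hvw.symm⟩, by rw [h]; exact hvw.symm⟩
          · exact ⟨vc, ⟨w, by simp, hvw.symm⟩, by rw [h]; exact hvu.symm⟩
          · exact ⟨w, ⟨vc, by simp, hvw⟩, by rw [h]; exact hwx.symm⟩
        · rw [Set.ncard_pair hvw.ne]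
          omega


theorem stmt17 [Fintype V] (G : SimpleGraph V) (hG : G.Connected)
    (heven : Even (Fintype.card V)) (hn : 4 ≤ Fintype.card V)
    (h : 2 * ntdNum G = Fintype.card V) :
    ∀ T : SimpleGraph V, T ≤ G → T.IsTree → 2 * ntdNum T = Fintype.card V := by
  intro T hle hTtree
  obtain ⟨S0, hS0, hS0card⟩ := keyNTD (Fintype.card V) V T hTtree rfl (by omega)
  -- upper bound for ntdNum T
  have hmemT : ntdNum T ∈ {n | ∃ S : Set V, IsNTDSet T S ∧ S.ncard = n} :=
    Nat.sInf_mem ⟨S0.ncard, S0, hS0, rfl⟩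
  have hupT : ntdNum T ≤ S0.ncard := Nat.sInf_le ⟨S0, hS0, rfl⟩
  -- ntdNum G ≤ ntdNum T
  obtain ⟨S1, hS1, hS1card⟩ := hmemT
  have hnbr : ∀ v : V, ∃ u, T.Adj v u :=
    exists_nbr hTtree.isConnected (by omega)
  have hntdG : ntdNum G ≤ ntdNum T := by
    rw [← hS1card]
    exact Nat.sInf_le ⟨S1, isNTDSet_mono hle hnbr hS1, rfl⟩
  have h1 : 2 * ntdNum T ≤ Fintype.card V + 1 := by omega
  have h2 : Fintype.card V ≤ 2 * ntdNum T := by omega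
  obtain ⟨k, hk⟩ := heven
  omega
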